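/- Let p be a prime, D a finite abelian p-group, E a subgroup of Aut(D) whose order is coprime to p, and G = D ⋊ E the semidirect product formed via the inclusion of E into Aut(D). Then Out(G) is isomorphic to N_{Aut(D)}(E)/E. Moreover, an isomorphism is induced by the map which sends α ∈ N_{Aut(D)}(E) to the class in Out(G) of the automorphism of G given by (d, e) ↦ (α(d), α∘e∘α^{-1}). -/

import Mathlib

/-- The subgroup of inner automorphisms of a group. -/
def Inn (G : Type*) [Group G] : Subgroup (MulAut G) :=
  (MulAut.conj : G →* MulAut G).range

instance Inn.normal (G : Type*) [Group G] : (Inn G).Normal := by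
  constructor
  rintro f ⟨g, rfl⟩ β
  refine ⟨β g, ?_⟩
  ext x
  simp [MulAut.conj_apply, MulAut.mul_apply, map_mul, mul_assoc]

/-- The outer automorphism group of a group. -/
abbrev Out (G : Type*) [Group G] := MulAut G ⧸ Inn G

open SemidirectProduct

section PhiDef

variable {D : Type*} [CommGroup D] {E : Subgroup (MulAut D)}

lemma conjMem {α : MulAut D} (hα : α ∈ (Subgroup.normalizer (E : Set (MulAut D)))) (e : E) :
    α * (e : MulAut D) * α⁻¹ ∈ E :=
  (Subgroup.mem_normalizer_iff.mp hα _).mp e.2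

/-- The automorphism of `D ⋊ E` induced by `α ∈ N(E)`. -/
def phi (α : ↥(Subgroup.normalizer (E : Set (MulAut D)))) : MulAut (D ⋊[E.subtype] E) where
  toFun g := ⟨(α : MulAut D) g.left, ⟨(α : MulAut D) * (g.right : MulAut D) * (α : MulAut D)⁻¹,
    conjMem α.2 g.right⟩⟩
  invFun g := ⟨((α : MulAut D))⁻¹ g.left,
    ⟨(α : MulAut D)⁻¹ * (g.right : MulAut D) * ((α : MulAut D)⁻¹)⁻¹, by
      simpa using conjMem (α⁻¹ : ↥(Subgroup.normalizer (E : Set (MulAut D)))).2 g.right⟩⟩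
  left_inv g := by ext <;> simp
  right_inv g := by ext <;> simp
  map_mul' a b := by
    ext
    · simp [MulAut.mul_apply]
    · simp only [mul_right, Subgroup.coe_mul, MulMemClass.mk_mul_mk, mul_left]
      congr 1
      ext d
      simp [MulAut.mul_apply]

/-- `phi` as a homomorphism `N(E) →* Aut(D ⋊ E)`. -/
def Phi : ↥(Subgroup.normalizer (E : Set (MulAut D))) →* MulAut (D ⋊[E.subtype] E) where
  toFun := phi
  map_one' := by
    ext g <;> simp [phi]
  map_mul' a b := by
    ext g
    · simp [phi, MulAut.mul_apply]
    · simp [phi, MulAut.mul_apply]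

@[simp] lemma Phi_apply (α : ↥(Subgroup.normalizer (E : Set (MulAut D)))) (d : D) (e : E) :
    (Phi α ⟨d, e⟩ : D ⋊[E.subtype] E) =
      ⟨(α : MulAut D) d, ⟨(α : MulAut D) * (e : MulAut D) * (α : MulAut D)⁻¹,
        conjMem α.2 e⟩⟩ := rfl

lemma Phi_inl (α : ↥(Subgroup.normalizer (E : Set (MulAut D)))) (d : D) :
    Phi α (inl d : D ⋊[E.subtype] E) = inl ((α : MulAut D) d) := by
  ext <;> simp [Phi, phi]

lemma Phi_inr (α : ↥(Subgroup.normalizer (E : Set (MulAut D)))) (e : E) :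
    Phi α (inr e : D ⋊[E.subtype] E) =
      inr ⟨(α : MulAut D) * (e : MulAut D) * (α : MulAut D)⁻¹, conjMem α.2 e⟩ := by
  ext <;> simp [Phi, phi]

end PhiDef

lemma exists_pow_inverse (n : ℕ) {Dk : Type*} [CommGroup Dk] [Finite Dk]
    (h : n.Coprime (Nat.card Dk)) : ∃ m, ∀ d : Dk, (d ^ n) ^ m = d := by
  set k := Nat.card Dk with hk
  have hk0 : 0 < k := Nat.card_pos
  have ht : n ^ k.totient ≡ 1 [MOD k] := Nat.ModEq.pow_totient h
  have htp : 0 < k.totient := Nat.totient_pos.mpr hk0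
  refine ⟨n ^ (k.totient - 1), fun d => ?_⟩
  rw [← pow_mul]
  have hnm : n * n ^ (k.totient - 1) = n ^ k.totient := by
    have h1 : k.totient - 1 + 1 = k.totient := by omega
    conv_rhs => rw [← h1]
    rw [pow_succ']
  rw [hnm]
  have hdvd : orderOf d ∣ k := hk ▸ orderOf_dvd_natCard d
  have : n ^ k.totient ≡ 1 [MOD orderOf d] := ht.of_dvd hdvd
  calc d ^ n ^ k.totient = d ^ 1 := pow_eq_pow_iff_modEq.mpr this
    _ = d := pow_one d

section Main

variable {p : ℕ} {D : Type*} [CommGroup D] [Finite D] {E : Subgroup (MulAut D)}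

lemma right_eq_one_iff (hE : (Nat.card E).Coprime p) (hD : IsPGroup p D)
    (g : D ⋊[E.subtype] E) : (∃ n, g ^ p ^ n = 1) ↔ g.right = 1 := by
  constructor
  · rintro ⟨n, hn⟩
    have h1 : g.right ^ p ^ n = 1 := by
      have h := congrArg rightHom hn
      simpa [map_pow] using h
    have h2 : orderOf g.right ∣ p ^ n := orderOf_dvd_of_pow_eq_one h1
    have h3 : orderOf g.right ∣ Nat.card E := orderOf_dvd_natCard _
    have h4 : (Nat.card E).Coprime (p ^ n) := hE.pow_right n
    have h5 := Nat.dvd_gcd h3 h2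
    rw [Nat.Coprime.gcd_eq_one h4] at h5
    exact orderOf_eq_one_iff.mp (Nat.dvd_one.mp h5)
  · intro h
    obtain ⟨n, hn⟩ := hD g.left
    refine ⟨n, ?_⟩
    have hg : g = inl g.left := by ext <;> simp [h]
    rw [hg, ← map_pow, hn, map_one]

set_option maxHeartbeats 1000000 in
lemma phi_surj (hp : p.Prime) (hD : IsPGroup p D) (hE : (Nat.card E).Coprime p)
    (ψ : MulAut (D ⋊[E.subtype] E)) :
    ∃ (α : ↥(Subgroup.normalizer (E : Set (MulAut D)))) (g : D ⋊[E.subtype] E), ψ = MulAut.conj g * Phi α := by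
  have : Fact p.Prime := ⟨hp⟩
  have hGfin : Finite (MulAut D) := inferInstance
  cases nonempty_fintype ↥E
  -- automorphisms preserve the set of p-elements, i.e. elements with trivial right component
  have key : ∀ (χ : MulAut (D ⋊[E.subtype] E)) (g : D ⋊[E.subtype] E),
      (χ g).right = 1 ↔ g.right = 1 := by
    intro χ g
    rw [← right_eq_one_iff hE hD, ← right_eq_one_iff hE hD g]
    constructor
    · rintro ⟨n, hn⟩
      exact ⟨n, χ.injective (by rw [map_pow, hn, map_one])⟩
    · rintro ⟨n, hn⟩
      exact ⟨n, by rw [← map_pow, hn, map_one]⟩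
  have hinl : ∀ (χ : MulAut (D ⋊[E.subtype] E)) (d : D),
      χ (inl d) = inl ((χ (inl d)).left) := by
    intro χ d
    exact SemidirectProduct.ext rfl ((key χ (inl d)).mpr rfl)
  -- the restriction of ψ to D
  set αf : MulAut D :=
    { toFun := fun d => (ψ (inl d)).left
      invFun := fun d => (ψ⁻¹ (inl d)).left
      left_inv := fun d => by
        show (ψ⁻¹ (inl ((ψ (inl d)).left))).left = d
        rw [← hinl ψ d]
        simp
      right_inv := fun d => by
        show (ψ (inl ((ψ⁻¹ (inl d)).left))).left = d
        rw [← hinl ψ⁻¹ d]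
        simp
      map_mul' := fun d₁ d₂ => by
        show (ψ (inl (d₁ * d₂))).left = (ψ (inl d₁)).left * (ψ (inl d₂)).left
        have h : (inl (d₁ * d₂) : D ⋊[E.subtype] E) = inl d₁ * inl d₂ := map_mul _ _ _
        rw [h, map_mul, mul_left]
        have h1 : (ψ (inl d₁)).right = 1 := (key ψ _).mpr rfl
        rw [h1]
        simp } with hαf
  set fc : E → D := fun e => (ψ (inr e)).left with hfc
  set τ : E → E := fun e => (ψ (inr e)).right with hτ
  have hψinr : ∀ e, ψ (inr e) = inl (fc e) * inr (τ e) := by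
    intro e
    ext <;> simp [fc, τ]
  have cocycle : ∀ e₁ e₂ : E, fc (e₁ * e₂) = fc e₁ * (τ e₁ : MulAut D) (fc e₂) := by
    intro e₁ e₂
    have h : ψ (inr (e₁ * e₂)) = ψ (inr e₁) * ψ (inr e₂) := by rw [← map_mul, map_mul]
    have h2 := congrArg SemidirectProduct.left h
    simpa [fc, τ] using h2
  -- averaging: fc is a coboundary
  obtain ⟨nD, hcard⟩ := IsPGroup.iff_card.mp hD
  have hco : (Nat.card E).Coprime (Nat.card D) := by
    rw [hcard]; exact hE.pow_right nD
  obtain ⟨m, hm⟩ := exists_pow_inverse (Nat.card E) hco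
  set P : D := ∏ e : E, fc e with hP
  have hfn : ∀ e₁ : E, fc e₁ ^ Nat.card E = P * ((τ e₁ : MulAut D) P)⁻¹ := by
    intro e₁
    have h1 : P = ∏ e : E, fc (e₁ * e) := (Equiv.prod_comp (Equiv.mulLeft e₁) fc).symm
    have h2 : ∏ e : E, fc (e₁ * e)
        = fc e₁ ^ Fintype.card E * (τ e₁ : MulAut D) (∏ e : E, fc e) := by
      simp only [cocycle]
      rw [Finset.prod_mul_distrib, Finset.prod_const, ← map_prod, Finset.card_univ]
    have h3 : P = fc e₁ ^ Nat.card E * (τ e₁ : MulAut D) P := by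
      rw [Nat.card_eq_fintype_card]
      exact h1.trans h2
    calc fc e₁ ^ Nat.card E
        = (fc e₁ ^ Nat.card E * (τ e₁ : MulAut D) P) * ((τ e₁ : MulAut D) P)⁻¹ := by
          rw [mul_inv_cancel_right]
      _ = P * ((τ e₁ : MulAut D) P)⁻¹ := by rw [← h3]
  set d₀ : D := (P ^ m)⁻¹ with hd₀
  have hfe : ∀ e : E, fc e = (τ e : MulAut D) d₀ * d₀⁻¹ := by
    intro e
    have h3 : fc e = (fc e ^ Nat.card E) ^ m := (hm (fc e)).symm
    rw [h3, hfn e, mul_pow, inv_pow, ← map_pow, hd₀, map_inv, inv_inv, mul_comm]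
  set ψ' : MulAut (D ⋊[E.subtype] E) := MulAut.conj (inl d₀) * ψ with hψ'
  have hψ'inl : ∀ d : D, ψ' (inl d) = inl (αf d) := by
    intro d
    show MulAut.conj (inl d₀) (ψ (inl d)) = _
    rw [hinl ψ d, MulAut.conj_apply, ← map_inv, ← map_mul, ← map_mul]
    congr 1
    rw [mul_comm d₀, mul_inv_cancel_right]
    rfl
  have hψ'inr : ∀ e : E, ψ' (inr e) = inr (τ e) := by
    intro e
    show MulAut.conj (inl d₀) (ψ (inr e)) = _
    rw [hψinr e, MulAut.conj_apply]
    ext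
    · simp [hfe e, mul_comm, mul_assoc, mul_left_comm]
    · simp
  have hταe : ∀ (e : E) (d : D), (τ e : MulAut D) (αf d) = αf (E.subtype e d) := by
    intro e d
    have h1 : ψ' (inl (E.subtype e d)) = inr (τ e) * inl (αf d) * inr (τ e)⁻¹ := by
      rw [inl_aut, map_mul, map_mul, map_inv, hψ'inl, hψ'inr, map_inv, hψ'inr e, map_inv]
    rw [hψ'inl, ← inl_aut] at h1
    exact (inl_injective h1.symm)
  have hτconj : ∀ e : E, (τ e : MulAut D) = αf * (e : MulAut D) * αf⁻¹ := by
    intro e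
    ext d
    have h := hταe e ((αf⁻¹ : MulAut D) d)
    rw [MulAut.apply_inv_self] at h
    simp only [MulAut.mul_apply]
    exact h
  have hτinj : Function.Injective τ := by
    intro e₁ e₂ h
    have h1 := hτconj e₁
    rw [h, hτconj e₂] at h1
    have h2 : (e₂ : MulAut D) = (e₁ : MulAut D) :=
      mul_left_cancel (mul_right_cancel h1)
    exact Subtype.ext h2.symm
  have hτsurj : Function.Surjective τ := Finite.surjective_of_injective hτinj
  have hmem : αf ∈ (Subgroup.normalizer (E : Set (MulAut D))) := by
    rw [Subgroup.mem_normalizer_iff]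
    intro h
    constructor
    · intro hh
      have := hτconj ⟨h, hh⟩
      rw [← this]
      exact (τ ⟨h, hh⟩).2
    · intro hh
      obtain ⟨e, he⟩ := hτsurj ⟨αf * h * αf⁻¹, hh⟩
      have h1 : (τ e : MulAut D) = αf * h * αf⁻¹ := by rw [he]
      rw [hτconj e] at h1
      have h2 : (e : MulAut D) = h := mul_left_cancel (mul_right_cancel h1)
      rw [← h2]
      exact e.2
  have hfinal : ψ' = Phi (⟨αf, hmem⟩ : ↥(Subgroup.normalizer (E : Set (MulAut D)))) := by
    apply MulEquiv.ext
    intro g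
    conv_lhs => rw [← inl_left_mul_inr_right g]
    conv_rhs => rw [← inl_left_mul_inr_right g]
    rw [map_mul, map_mul, hψ'inl, hψ'inr, Phi_inl, Phi_inr]
    congr 1
    exact congrArg inr (Subtype.ext (hτconj g.right))
  refine ⟨⟨αf, hmem⟩, (inl d₀)⁻¹, ?_⟩
  rw [← hfinal, hψ', map_inv, ← mul_assoc, inv_mul_cancel, one_mul]

lemma ker_Phi_comp :
    ((QuotientGroup.mk' (Inn (D ⋊[E.subtype] E))).comp Phi).ker
      = E.subgroupOf (Subgroup.normalizer (E : Set (MulAut D))) := by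
  ext α
  simp only [MonoidHom.mem_ker, MonoidHom.comp_apply, QuotientGroup.mk'_apply,
    QuotientGroup.eq_one_iff, Subgroup.mem_subgroupOf]
  constructor
  · rintro ⟨g, hg⟩
    have hd : ∀ d : D, (α : MulAut D) d = E.subtype g.right d := by
      intro d
      have h := congrArg (fun χ : MulAut (D ⋊[E.subtype] E) => (χ (inl d)).left) hg
      simp only [MulAut.conj_apply] at h
      rw [Phi_inl] at h
      simp only [left_inl] at h
      rw [← h]
      simp [mul_comm, mul_assoc, mul_left_comm]
    have hα : (α : MulAut D) = E.subtype g.right := by ext d; exact hd d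
    rw [hα]
    exact g.right.2
  · intro hα
    refine ⟨inr (⟨(α : MulAut D), hα⟩ : E), ?_⟩
    apply MulEquiv.ext
    intro g
    conv_lhs => rw [← inl_left_mul_inr_right g]
    conv_rhs => rw [← inl_left_mul_inr_right g]
    rw [MulAut.conj_apply, map_mul, Phi_inl, Phi_inr]
    ext
    · simp
    · simp

end Main

theorem stmt0 (p : ℕ) (hp : p.Prime) (D : Type*) [CommGroup D] [Finite D]
    (hD : IsPGroup p D) (E : Subgroup (MulAut D)) (hE : (Nat.card E).Coprime p) :
    ∃ iso : ((Subgroup.normalizer (E : Set (MulAut D))) ⧸ E.subgroupOf (Subgroup.normalizer (E : Set (MulAut D)))) ≃* Out (D ⋊[E.subtype] E),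
      ∀ (α : MulAut D) (hα : α ∈ (Subgroup.normalizer (E : Set (MulAut D)))),
        ∃ ψ : MulAut (D ⋊[E.subtype] E),
          (∀ (d : D) (e : E),
              (ψ ⟨d, e⟩).left = α d ∧
              ((ψ ⟨d, e⟩).right : MulAut D) = α * (e : MulAut D) * α⁻¹) ∧
          iso (QuotientGroup.mk (⟨α, hα⟩ : (Subgroup.normalizer (E : Set (MulAut D))))) = QuotientGroup.mk ψ := by
  set f : ↥(Subgroup.normalizer (E : Set (MulAut D))) →* Out (D ⋊[E.subtype] E) :=
    (QuotientGroup.mk' (Inn (D ⋊[E.subtype] E))).comp Phi with hf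
  have hsurj : Function.Surjective f := by
    intro q
    obtain ⟨ψ, rfl⟩ := QuotientGroup.mk'_surjective _ q
    obtain ⟨α, g, hg⟩ := phi_surj hp hD hE ψ
    refine ⟨α, ?_⟩
    rw [hf]
    simp only [MonoidHom.comp_apply, QuotientGroup.mk'_apply]
    rw [hg, QuotientGroup.mk_mul]
    have : (QuotientGroup.mk (MulAut.conj g) : Out (D ⋊[E.subtype] E)) = 1 :=
      (QuotientGroup.eq_one_iff _).mpr ⟨g, rfl⟩
    rw [this, one_mul]
  have hker : f.ker = E.subgroupOf (Subgroup.normalizer (E : Set (MulAut D))) := ker_Phi_comp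
  refine ⟨(QuotientGroup.quotientMulEquivOfEq hker.symm).trans
    (QuotientGroup.quotientKerEquivOfSurjective f hsurj), ?_⟩
  intro α hα
  refine ⟨Phi ⟨α, hα⟩, ⟨fun d e => ⟨rfl, rfl⟩, ?_⟩⟩
  rw [MulEquiv.trans_apply, QuotientGroup.quotientMulEquivOfEq_mk]
  rfl
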